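/- With M_n(u) the Motzkin polynomials and x an indeterminate, det((x·M_{i+j+1}(u) − M_{i+j+2}(u))_{i,j=0}^{n}) = Σ_{k=0}^{n+1} (−1)^{n+1−k} F_{k+1}(u, −1)·F_{k+1}(x − u, −1). -/

import Mathlib

open Finset MvPolynomial

noncomputable section MotzkinHankelAux
open Polynomial Matrix

abbrev Rxu := MvPolynomial (Fin 2) ℤ
def uu : Rxu := MvPolynomial.X 1
def xx : Rxu := MvPolynomial.X 0
def CCz : ℤ → Rxu := fun z => MvPolynomial.C z

@[simp] lemma CCz_add (a b : ℤ) : CCz (a+b) = CCz a + CCz b := map_add _ _ _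
@[simp] lemma CCz_zero : CCz 0 = 0 := map_zero _
@[simp] lemma CCz_one : CCz 1 = 1 := map_one _
@[simp] lemma CCz_mul (a b : ℤ) : CCz (a*b) = CCz a * CCz b := map_mul _ _ _

def Fb : ℕ → Polynomial ℤ
  | 0 => 0
  | 1 => 1
  | (n+2) => Polynomial.X * Fb (n+1) - Fb n

@[simp] lemma Fb_zero : Fb 0 = 0 := rfl
@[simp] lemma Fb_one : Fb 1 = 1 := rfl
lemma Fb_rec (n : ℕ) : Fb (n+2) = Polynomial.X * Fb (n+1) - Fb n := rfl

def Dz (b k : ℕ) : ℤ := ((b + 2*k).choose k : ℤ) - ((b + 2*k).choose (b + k + 1) : ℤ)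

@[simp] lemma Dz_zero (b : ℕ) : Dz b 0 = 1 := by
  simp [Dz, Nat.choose_eq_zero_of_lt (by omega : b < b + 0 + 1)]

lemma Dz_cast (b k : ℕ) : Dz b k = ((b + 2*k).choose k : ℤ) - ((b + 2*k).choose (b + k + 1) : ℤ) := rfl

lemma Dz_rec (b k : ℕ) : Dz (b+1) (k+1) = Dz b (k+1) + Dz (b+2) k := by
  set n := b + 2*k + 2 with hn
  have e0 : (b+1) + 2*(k+1) = n + 1 := by omega
  have e1 : b + 2*(k+1) = n := by omega
  have e2 : (b+2) + 2*k = n := by omega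
  simp only [Dz, e0, e1, e2]
  have p1 : (n+1).choose (k+1) = n.choose k + n.choose (k+1) := Nat.choose_succ_succ n k
  have e3 : (b+1) + (k+1) + 1 = (b + k + 2) + 1 := by omega
  rw [e3]
  have p2 : (n+1).choose ((b+k+2)+1) = n.choose (b+k+2) + n.choose (b+k+3) := Nat.choose_succ_succ n (b+k+2)
  rw [p1, p2]
  have e4 : b + (k+1) + 1 = b + k + 2 := by omega
  have e5 : (b+2) + k + 1 = b + k + 3 := by omega
  rw [e4, e5]
  push_cast
  ring

lemma Dz_zero_rec (k : ℕ) : Dz 0 (k+1) = Dz 1 k := by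
  set n := 2*k + 1 with hn
  have e0 : 0 + 2*(k+1) = n + 1 := by omega
  have e1 : 1 + 2*k = n := by omega
  simp only [Dz, e0, e1]
  have p1 : (n+1).choose (k+1) = n.choose k + n.choose (k+1) := Nat.choose_succ_succ n k
  have e2 : 0 + (k+1) + 1 = (k+1) + 1 := by omega
  rw [e2]
  have p2 : (n+1).choose ((k+1)+1) = n.choose (k+1) + n.choose (k+2) := Nat.choose_succ_succ n (k+1)
  rw [p1, p2]
  have e3 : 1 + k + 1 = k + 2 := by omega
  rw [e3]
  push_cast
  ring

lemma catalan_eq_Dz (k : ℕ) : (catalan k : ℤ) = Dz 0 k := by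
  have hk1 : ((k : ℤ) + 1) ≠ 0 := by positivity
  apply mul_left_cancel₀ hk1
  have h1 : ((k:ℤ)+1) * (catalan k : ℤ) = ((2*k).choose k : ℤ) := by
    have := succ_mul_catalan_eq_centralBinom k
    have h : ((k+1) * catalan k : ℕ) = (k.centralBinom : ℕ) := this
    have := congrArg (Nat.cast (R := ℤ)) h
    push_cast at this
    rw [this, Nat.centralBinom]
  have h2 : ((2*k).choose (k+1) : ℤ) * ((k:ℤ)+1) = ((2*k).choose k : ℤ) * k := by
    have := Nat.choose_succ_right_eq (2*k) k
    have h : (2*k).choose (k+1) * (k+1) = (2*k).choose k * k := by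
      rw [this]; congr 1; omega
    exact_mod_cast congrArg (Nat.cast (R := ℤ)) h
  simp only [Dz, zero_add]
  have e : 0 + k + 1 = k + 1 := by omega
  rw [h1]
  nlinarith [h2]

def am : ℕ → ℕ → Rxu
  | 0, b => if b = 0 then 1 else 0
  | (m+1), 0 => uu * am m 0 + am m 1
  | (m+1), (b+1) => am m b + uu * am m (b+1) + am m (b+2)

def gm (m b : ℕ) : Rxu :=
  ∑ k ∈ range (m+1), CCz ((m.choose (b+2*k) : ℤ) * Dz b k) * uu ^ (m - (b+2*k))

lemma gm_zero (b : ℕ) : gm 0 b = if b = 0 then 1 else 0 := by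
  rw [gm, range_one, sum_singleton]
  rcases Nat.eq_zero_or_pos b with hb | hb
  · subst hb; simp
  · rw [Nat.choose_eq_zero_of_lt (by omega : 0 < b + 2*0)]
    simp [if_neg (by omega : ¬ b = 0)]

lemma gm_ext (m b N : ℕ) (hN : m + 1 ≤ N) :
    gm m b = ∑ k ∈ range N, CCz ((m.choose (b+2*k) : ℤ) * Dz b k) * uu ^ (m - (b+2*k)) := by
  rw [gm]
  apply Finset.sum_subset (by intro k hk; simp at hk ⊢; omega)
  intro k _ hk
  simp only [mem_range, not_lt] at hk
  rw [Nat.choose_eq_zero_of_lt (by omega)]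
  simp

lemma gm_rec_zero (m : ℕ) : gm (m+1) 0 = uu * gm m 0 + gm m 1 := by
  have key : ∀ k, CCz (((m+1).choose (0+2*k) : ℤ) * Dz 0 k) * uu ^ ((m+1) - (0+2*k))
      = uu * (CCz ((m.choose (0+2*k) : ℤ) * Dz 0 k) * uu ^ (m - (0+2*k)))
        + (if k = 0 then 0 else
            CCz ((m.choose (1+2*(k-1)) : ℤ) * Dz 1 (k-1)) * uu ^ (m - (1+2*(k-1)))) := by
    intro k
    rcases Nat.eq_zero_or_pos k with hk | hk
    · subst hk
      simp only [Nat.mul_zero, Nat.add_zero, Nat.choose_zero_right, Dz_zero, if_pos rfl, add_zero]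
      rw [Nat.sub_zero, Nat.sub_zero, pow_succ]
      push_cast; ring
    · obtain ⟨k', rfl⟩ : ∃ k', k = k' + 1 := ⟨k - 1, by omega⟩
      rw [if_neg (by omega)]
      have hpas : (m+1).choose (0+2*(k'+1)) = m.choose (2*k'+1) + m.choose (0+2*(k'+1)) := by
        rw [show (0+2*(k'+1)) = (2*k'+1)+1 by omega]
        exact Nat.choose_succ_succ m (2*k'+1)
      have hDz : Dz 0 (k'+1) = Dz 1 k' := Dz_zero_rec k'
      rw [hpas, hDz]
      have hidx : (k'+1) - 1 = k' := by omega
      rw [hidx]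
      have hexp1 : (m+1) - (0+2*(k'+1)) = m - (1+2*k') := by omega
      rw [hexp1]
      by_cases hle : 0 + 2*(k'+1) ≤ m
      · have he : m - (1+2*k') = (m - (0+2*(k'+1))) + 1 := by omega
        rw [he, pow_succ]
        rw [show (2*k'+1) = 1+2*k' by omega]
        push_cast
        simp only [CCz_add, CCz_mul]
        ring
      · rw [Nat.choose_eq_zero_of_lt (by omega : m < 0+2*(k'+1))]
        rw [show (2*k'+1) = 1+2*k' by omega]
        push_cast
        simp only [CCz_add, CCz_mul]
        simp
  rw [gm]
  rw [Finset.sum_congr rfl (fun k _ => key k)]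
  rw [Finset.sum_add_distrib, ← Finset.mul_sum]
  congr 1
  · rw [gm_ext m 0 (m+2) (by omega)]
  · rw [Finset.sum_range_succ' _ (m+1), if_pos rfl, add_zero]
    rw [gm]
    apply Finset.sum_congr rfl
    intro k _
    rw [if_neg (Nat.succ_ne_zero k)]
    congr 2 <;> omega

lemma gm_rec_succ (m b : ℕ) :
    gm (m+1) (b+1) = gm m b + uu * gm m (b+1) + gm m (b+2) := by
  have key : ∀ k, CCz (((m+1).choose ((b+1)+2*k) : ℤ) * Dz (b+1) k) * uu ^ ((m+1) - ((b+1)+2*k))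
      = CCz ((m.choose (b+2*k) : ℤ) * Dz b k) * uu ^ (m - (b+2*k))
        + uu * (CCz ((m.choose ((b+1)+2*k) : ℤ) * Dz (b+1) k) * uu ^ (m - ((b+1)+2*k)))
        + (if k = 0 then 0 else
            CCz ((m.choose ((b+2)+2*(k-1)) : ℤ) * Dz (b+2) (k-1)) * uu ^ (m - ((b+2)+2*(k-1)))) := by
    intro k
    have hexp0 : (m+1) - ((b+1)+2*k) = m - (b+2*k) := by omega
    have hpas : (m+1).choose ((b+1)+2*k) = m.choose (b+2*k) + m.choose ((b+1)+2*k) := by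
      rw [show ((b+1)+2*k) = (b+2*k)+1 by omega]
      exact Nat.choose_succ_succ m (b+2*k)
    rw [hexp0, hpas]
    rcases Nat.eq_zero_or_pos k with hk | hk
    · subst hk
      simp only [Nat.mul_zero, Nat.add_zero, Dz_zero, if_pos rfl, add_zero]
      by_cases hle : b + 1 ≤ m
      · have he : m - b = (m - (b+1)) + 1 := by omega
        rw [he, pow_succ]
        push_cast
        simp only [CCz_add, CCz_mul]
        ring
      · rw [Nat.choose_eq_zero_of_lt (by omega : m < b+1)]
        push_cast
        simp only [CCz_add, CCz_mul]
        simp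
    · obtain ⟨k', rfl⟩ : ∃ k', k = k' + 1 := ⟨k - 1, by omega⟩
      rw [if_neg (by omega)]
      have hDz : Dz (b+1) (k'+1) = Dz b (k'+1) + Dz (b+2) k' := Dz_rec b k'
      rw [hDz]
      have hidx : (k'+1) - 1 = k' := by omega
      rw [hidx]
      have he2 : (b+2)+2*k' = b+2*(k'+1) := by omega
      rw [he2]
      by_cases hle : (b+1)+2*(k'+1) ≤ m
      · have he : m - (b+2*(k'+1)) = (m - ((b+1)+2*(k'+1))) + 1 := by omega
        rw [he, pow_succ]
        push_cast
        simp only [CCz_add, CCz_mul]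
        ring
      · rw [Nat.choose_eq_zero_of_lt (by omega : m < (b+1)+2*(k'+1))]
        push_cast
        simp only [CCz_add, CCz_mul]
        simp only [CCz_zero, zero_mul, mul_zero, add_zero, zero_add]
        ring
  rw [gm]
  rw [Finset.sum_congr rfl (fun k _ => key k)]
  rw [Finset.sum_add_distrib, Finset.sum_add_distrib, ← Finset.mul_sum]
  congr 1
  · congr 1
    · rw [gm_ext m b (m+2) (by omega)]
    · rw [gm_ext m (b+1) (m+2) (by omega)]
  · rw [Finset.sum_range_succ' _ (m+1), if_pos rfl, add_zero]
    rw [gm]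
    apply Finset.sum_congr rfl
    intro k _
    rw [if_neg (Nat.succ_ne_zero k)]
    congr 2 <;> omega

lemma am_eq_gm : ∀ m b, am m b = gm m b := by
  intro m
  induction m with
  | zero => intro b; rw [gm_zero]; rfl
  | succ m ih =>
    intro b
    cases b with
    | zero => rw [show am (m+1) 0 = uu * am m 0 + am m 1 from rfl, ih, ih, gm_rec_zero]
    | succ b =>
      rw [show am (m+1) (b+1) = am m b + uu * am m (b+1) + am m (b+2) from rfl,
        ih, ih, ih, gm_rec_succ]

lemma am_diag (m : ℕ) : am m m = 1 := by
  rw [am_eq_gm, gm]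
  rw [Finset.sum_eq_single 0]
  · simp
  · intro k _ hk
    rw [Nat.choose_eq_zero_of_lt (by omega)]
    simp
  · simp

lemma am_eq_zero_of_lt {m b : ℕ} (h : m < b) : am m b = 0 := by
  rw [am_eq_gm, gm]
  apply Finset.sum_eq_zero
  intro k _
  rw [Nat.choose_eq_zero_of_lt (by omega)]
  simp


lemma am_zero (b : ℕ) : am 0 b = if b = 0 then 1 else 0 := rfl
lemma am_rec0 (m : ℕ) : am (m+1) 0 = uu * am m 0 + am m 1 := rfl
lemma am_rec (m b : ℕ) : am (m+1) (b+1) = am m b + uu * am m (b+1) + am m (b+2) := rfl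
lemma Fb_deg_pair : ∀ k, (Fb (k+1)).natDegree ≤ k ∧ (Fb (k+2)).natDegree ≤ k+1 := by
  intro k
  induction k with
  | zero =>
    constructor
    · simp
    · rw [Fb_rec]
      refine le_trans (natDegree_sub_le _ _) ?_
      simp [natDegree_X]
  | succ k ih =>
    refine ⟨ih.2, ?_⟩
    rw [Fb_rec]
    refine le_trans (natDegree_sub_le _ _) (max_le ?_ ?_)
    · refine le_trans (natDegree_mul_le) ?_
      simp only [natDegree_X]
      have h2 : (Fb (k+1+1)).natDegree ≤ k+1 := ih.2
      omega
    · have h1 : (Fb (k+1)).natDegree ≤ k := ih.1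
      omega

lemma Fb_deg (k : ℕ) : (Fb (k+1)).natDegree ≤ k := (Fb_deg_pair k).1

/-- shifted Chebyshev-like polynomials -/
def pp (k : ℕ) : Polynomial Rxu :=
  ((Fb (k+1)).map (Int.castRingHom Rxu)).comp (Polynomial.X - Polynomial.C uu)

@[simp] lemma pp_zero : pp 0 = 1 := by simp [pp]
@[simp] lemma pp_one : pp 1 = Polynomial.X - Polynomial.C uu := by
  have : Fb 2 = Polynomial.X := by rw [Fb_rec]; simp
  simp [pp, this]

lemma pp_rec (k : ℕ) :
    pp (k+2) = (Polynomial.X - Polynomial.C uu) * pp (k+1) - pp k := by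
  simp only [pp, Fb_rec, Polynomial.map_sub, Polynomial.map_mul, Polynomial.map_X, sub_comp, mul_comp, X_comp]

lemma pp_deg (k : ℕ) : (pp k).natDegree ≤ k := by
  refine le_trans (natDegree_comp_le) ?_
  refine le_trans (Nat.mul_le_mul (natDegree_map_le) le_rfl) ?_
  rw [natDegree_X_sub_C, mul_one]
  exact Fb_deg k

lemma pp_coeff_zero {k j : ℕ} (h : k < j) : (pp k).coeff j = 0 :=
  coeff_eq_zero_of_natDegree_lt (lt_of_le_of_lt (pp_deg k) h)

/-- `pp (b-1)` with junk 0 at 0 -/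
def ppm : ℕ → Polynomial Rxu
  | 0 => 0
  | (b+1) => pp b

lemma X_mul_pp (b : ℕ) :
    Polynomial.X * pp b = pp (b+1) + Polynomial.C uu * pp b + ppm b := by
  cases b with
  | zero =>
    rw [pp_zero, pp_one]
    show Polynomial.X * 1 = (Polynomial.X - Polynomial.C uu) + Polynomial.C uu * 1 + 0
    ring
  | succ b =>
    have h := pp_rec b
    show _ = _ + _ + pp b
    rw [h]; ring

theorem expand_X_pow : ∀ m, (Polynomial.X : Polynomial Rxu)^m
    = ∑ b ∈ range (m+1), Polynomial.C (am m b) * pp b := by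
  intro m
  induction m with
  | zero => simp [am_zero]
  | succ m ih =>
    have lhs : (Polynomial.X : Polynomial Rxu)^(m+1)
        = ∑ b ∈ range (m+1), Polynomial.C (am m b) * pp (b+1)
          + ∑ b ∈ range (m+1), Polynomial.C (uu * am m b) * pp b
          + ∑ b ∈ range (m+1), Polynomial.C (am m b) * ppm b := by
      rw [pow_succ, mul_comm, ih, Finset.mul_sum]
      rw [← Finset.sum_add_distrib, ← Finset.sum_add_distrib]
      apply Finset.sum_congr rfl
      intro b _
      rw [show Polynomial.X * (Polynomial.C (am m b) * pp b)
          = Polynomial.C (am m b) * (Polynomial.X * pp b) from by ring, X_mul_pp]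
      rw [_root_.map_mul]
      ring
    rw [lhs]
    rw [Finset.sum_range_succ' (fun b => Polynomial.C (am (m+1) b) * pp b) (m+1)]
    simp only [am_rec0, am_rec]
    have hT3 : ∑ b ∈ range (m+1), Polynomial.C (am m b) * ppm b
        = ∑ b ∈ range m, Polynomial.C (am m (b+1)) * pp b := by
      rw [Finset.sum_range_succ' (fun b => Polynomial.C (am m b) * ppm b) m]
      simp [ppm]
    have hU2 : ∑ b ∈ range (m+1), Polynomial.C (uu * am m (b+1)) * pp (b+1)
          + Polynomial.C (uu * am m 0) * pp 0
        = ∑ b ∈ range (m+1), Polynomial.C (uu * am m b) * pp b := by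
      rw [← Finset.sum_range_succ' (fun b => Polynomial.C (uu * am m b) * pp b) (m+1)]
      rw [Finset.sum_range_succ]
      simp [am_eq_zero_of_lt (show m < m+1 by omega)]
    have hU3 : ∑ b ∈ range (m+1), Polynomial.C (am m (b+2)) * pp (b+1)
          + Polynomial.C (am m 1) * pp 0
        = ∑ b ∈ range m, Polynomial.C (am m (b+1)) * pp b := by
      rw [← Finset.sum_range_succ' (fun b => Polynomial.C (am m (b+1)) * pp b) (m+1)]
      rw [Finset.sum_range_succ, Finset.sum_range_succ]
      simp [am_eq_zero_of_lt (show m < m+1 by omega),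
        am_eq_zero_of_lt (show m < m+2 by omega)]
    have hsplit : ∑ b ∈ range (m+1),
          Polynomial.C (am m b + uu * am m (b+1) + am m (b+2)) * pp (b+1)
        = ∑ b ∈ range (m+1), Polynomial.C (am m b) * pp (b+1)
          + ∑ b ∈ range (m+1), Polynomial.C (uu * am m (b+1)) * pp (b+1)
          + ∑ b ∈ range (m+1), Polynomial.C (am m (b+2)) * pp (b+1) := by
      rw [← Finset.sum_add_distrib, ← Finset.sum_add_distrib]
      apply Finset.sum_congr rfl
      intro b _
      rw [map_add, map_add]
      ring
    rw [hT3, hsplit, map_add]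
    linear_combination -hU2 - hU3

def LL : Polynomial Rxu →ₗ[Rxu] Rxu where
  toFun q := q.sum fun i c => c * am i 0
  map_add' p q := Polynomial.sum_add_index p q _ (fun i => zero_mul _) (fun i a b => add_mul a b _)
  map_smul' r q := by
    rw [RingHom.id_apply, smul_eq_mul,
      Polynomial.sum_smul_index q r (fun i c => c * am i 0) (fun i => zero_mul _)]
    rw [Polynomial.sum, Polynomial.sum, Finset.mul_sum]
    exact Finset.sum_congr rfl fun i _ => by ring

lemma LL_apply (q : Polynomial Rxu) : LL q = q.sum fun i c => c * am i 0 := rfl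

lemma LL_X_pow (m : ℕ) : LL ((Polynomial.X : Polynomial Rxu)^m) = am m 0 := by
  rw [LL_apply, Polynomial.X_pow_eq_monomial]
  exact (Polynomial.sum_monomial_index 1 (fun i c => c * am i 0) (zero_mul _)).trans (one_mul _)

lemma LL_C_mul (r : Rxu) (q : Polynomial Rxu) : LL (Polynomial.C r * q) = r * LL q := by
  rw [← Polynomial.smul_eq_C_mul, LinearMap.map_smul, smul_eq_mul]

lemma LL_pp (b : ℕ) : LL (pp b) = if b = 0 then 1 else 0 := by
  classical
  set N := b + 1 with hN
  set Am : Matrix (Fin N) (Fin N) Rxu := Matrix.of fun m j => am (m:ℕ) (j:ℕ) with hAm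
  set Pm : Matrix (Fin N) (Fin N) Rxu := Matrix.of fun i j => (pp (i:ℕ)).coeff (j:ℕ) with hPm
  have hAP : Am * Pm = 1 := by
    refine Matrix.ext fun m j => ?_
    rw [Matrix.mul_apply, Matrix.one_apply]
    have hcoeff := congrArg (fun q => Polynomial.coeff q (j:ℕ)) (expand_X_pow (m:ℕ))
    simp only [Polynomial.finset_sum_coeff, Polynomial.coeff_C_mul, Polynomial.coeff_X_pow]
      at hcoeff
    have hext : ∑ c ∈ range ((m:ℕ)+1), am (m:ℕ) c * (pp c).coeff (j:ℕ)
        = ∑ c ∈ range N, am (m:ℕ) c * (pp c).coeff (j:ℕ) := by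
      apply Finset.sum_subset (by intro c hc; simp at hc ⊢; omega)
      intro c _ hc
      simp only [mem_range, not_lt] at hc
      rw [am_eq_zero_of_lt (by omega), zero_mul]
    calc ∑ c : Fin N, Am m c * Pm c j
        = ∑ c ∈ range N, am (m:ℕ) c * (pp c).coeff (j:ℕ) :=
          Fin.sum_univ_eq_sum_range (fun c => am (m:ℕ) c * (pp c).coeff (j:ℕ)) N
      _ = ∑ c ∈ range ((m:ℕ)+1), am (m:ℕ) c * (pp c).coeff (j:ℕ) := hext.symm
      _ = if (j:ℕ) = (m:ℕ) then 1 else 0 := hcoeff.symm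
      _ = if m = j then 1 else 0 := by
          by_cases h : m = j
          · simp [h]
          · rw [if_neg (fun hc => h (Fin.ext hc.symm)), if_neg h]
  have hPA : Pm * Am = 1 := mul_eq_one_comm.mp hAP
  have hentry := congrFun (congrFun hPA ⟨b, by omega⟩) ⟨0, by omega⟩
  rw [Matrix.mul_apply, Matrix.one_apply] at hentry
  have hfin : ∑ c : Fin N, Pm ⟨b, by omega⟩ c * Am c ⟨0, by omega⟩
      = ∑ i ∈ range N, (pp b).coeff i * am i 0 :=
    Fin.sum_univ_eq_sum_range (fun i => (pp b).coeff i * am i 0) N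
  rw [hfin] at hentry
  have hLL : LL (pp b) = ∑ i ∈ range N, (pp b).coeff i * am i 0 := by
    rw [LL_apply]
    exact Polynomial.sum_over_range' _ (fun i => zero_mul (am i 0)) N (by have := pp_deg b; omega)
  rw [hLL, hentry]
  by_cases h : b = 0
  · subst h; simp
  · rw [if_neg (by simp [Fin.ext_iff]; omega), if_neg h]


lemma LL_ppm (b : ℕ) : LL (ppm b) = if b = 1 then 1 else 0 := by
  cases b with
  | zero => show LL 0 = _; rw [map_zero]; simp
  | succ b' =>
    show LL (pp b') = _
    rw [LL_pp]
    by_cases h : b' = 0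
    · subst h; simp
    · rw [if_neg h, if_neg (by omega)]

lemma orth_zero (b : ℕ) : LL (pp 0 * pp b) = if 0 = b then 1 else 0 := by
  rw [pp_zero, one_mul, LL_pp]
  by_cases h : b = 0
  · subst h; simp
  · rw [if_neg h, if_neg (by omega)]

lemma orth_one (b : ℕ) : LL (pp 1 * pp b) = if 1 = b then 1 else 0 := by
  have hprod : pp 1 * pp b = pp (b+1) + ppm b := by
    rw [pp_one]
    linear_combination X_mul_pp b
  rw [hprod, map_add, LL_pp, LL_ppm, if_neg (Nat.succ_ne_zero b)]
  by_cases h : b = 1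
  · subst h; simp
  · rw [if_neg h, if_neg (by omega), zero_add]

lemma orth_step (a b : ℕ)
    (ha : ∀ c, LL (pp a * pp c) = if a = c then 1 else 0)
    (ha1 : ∀ c, LL (pp (a+1) * pp c) = if a+1 = c then 1 else 0) :
    LL (pp (a+2) * pp b) = if a+2 = b then 1 else 0 := by
  have hprod : pp (a+2) * pp b = pp (a+1) * pp (b+1) + pp (a+1) * ppm b - pp a * pp b := by
    have h1 := pp_rec a
    have h2 := X_mul_pp b
    linear_combination (pp b) * h1 + (pp (a+1)) * h2
  rw [hprod, map_sub, map_add, ha1 (b+1), ha b]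
  cases b with
  | zero =>
    have : pp (a+1) * ppm 0 = 0 := by show _ * (0 : Polynomial Rxu) = 0; rw [mul_zero]
    rw [this, map_zero]
    by_cases h : a = 0
    · subst h; norm_num
    · rw [if_neg (by omega), if_neg h, if_neg (by omega)]; ring
  | succ b' =>
    have : pp (a+1) * ppm (b'+1) = pp (a+1) * pp b' := rfl
    rw [this, ha1 b']
    by_cases h1 : a = b' + 1
    · subst h1
      rw [if_pos rfl, if_neg (by omega), if_pos rfl, if_neg (by omega)]; ring
    · by_cases h2 : a + 1 = b'
      · rw [if_neg (by omega), if_pos h2, if_neg (by omega), if_pos (by omega)]; ring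
      · rw [if_neg (by omega), if_neg h2, if_neg (by omega), if_neg (by omega)]; ring

theorem orth : ∀ a b : ℕ, LL (pp a * pp b) = if a = b then 1 else 0 := by
  have H : ∀ a, (∀ b, LL (pp a * pp b) = if a = b then 1 else 0)
      ∧ (∀ b, LL (pp (a+1) * pp b) = if a+1 = b then 1 else 0) := by
    intro a
    induction a with
    | zero => exact ⟨orth_zero, orth_one⟩
    | succ a ih => exact ⟨ih.2, fun b => orth_step a b ih.1 ih.2⟩
  exact fun a => (H a).1

def gramFun (a b : ℕ) : Rxu :=
  (uu*(xx-uu) - 2) * (if a = b then 1 else 0) + (if a = 0 ∧ b = 0 then 1 else 0)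
    + (xx - 2*uu) * ((if a+1 = b then 1 else 0) + (if b+1 = a then 1 else 0))
    - (if a+2 = b then 1 else 0) - (if b+2 = a then 1 else 0)

lemma Lmp (a b : ℕ) : LL (ppm a * pp b) = if b+1 = a then 1 else 0 := by
  cases a with
  | zero =>
    show LL (0 * pp b) = _
    rw [zero_mul, map_zero, if_neg (by omega)]
  | succ a' =>
    show LL (pp a' * pp b) = _
    rw [orth]
    by_cases h : a' = b
    · rw [if_pos h, if_pos (by omega)]
    · rw [if_neg h, if_neg (by omega)]

lemma Lpm (a b : ℕ) : LL (pp a * ppm b) = if a+1 = b then 1 else 0 := by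
  cases b with
  | zero =>
    show LL (pp a * 0) = _
    rw [mul_zero, map_zero, if_neg (by omega)]
  | succ b' =>
    show LL (pp a * pp b') = _
    rw [orth]
    by_cases h : a = b'
    · rw [if_pos h, if_pos (by omega)]
    · rw [if_neg h, if_neg (by omega)]

lemma Lmm (a b : ℕ) : LL (ppm a * ppm b)
    = (if a = b then 1 else 0) - (if a = 0 ∧ b = 0 then (1:Rxu) else 0) := by
  cases a with
  | zero =>
    show LL (0 * ppm b) = _
    rw [zero_mul, map_zero]
    by_cases h : b = 0
    · subst h; norm_num
    · rw [if_neg (by omega), if_neg (by omega)]; ring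
  | succ a' =>
    cases b with
    | zero =>
      show LL (pp a' * 0) = _
      rw [mul_zero, map_zero, if_neg (by omega), if_neg (by omega)]; ring
    | succ b' =>
      show LL (pp a' * pp b') = _
      rw [orth, if_neg (by omega : ¬ (a'+1 = 0 ∧ b'+1 = 0)), sub_zero]
      by_cases h : a' = b'
      · rw [if_pos h, if_pos (by omega)]
      · rw [if_neg h, if_neg (by omega)]

def ww : Polynomial Rxu := (Polynomial.C xx - Polynomial.X) * Polynomial.X

set_option maxHeartbeats 1000000 in
lemma LL_ww (b c : ℕ) : LL (ww * pp b * pp c) = gramFun b c := by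
  have hb := X_mul_pp b
  have hc := X_mul_pp c
  have e1 : ww * pp b * pp c
      = Polynomial.C xx * ((Polynomial.X * pp b) * pp c)
        - (Polynomial.X * pp b) * (Polynomial.X * pp c) := by
    rw [ww]; ring
  rw [hb, hc] at e1
  have e2 : ww * pp b * pp c
      = Polynomial.C xx * (pp (b+1) * pp c)
      + Polynomial.C xx * (Polynomial.C uu * (pp b * pp c))
      + Polynomial.C xx * (ppm b * pp c)
      - pp (b+1) * pp (c+1)
      - Polynomial.C uu * (pp (b+1) * pp c)
      - pp (b+1) * ppm c
      - Polynomial.C uu * (pp b * pp (c+1))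
      - Polynomial.C uu * (Polynomial.C uu * (pp b * pp c))
      - Polynomial.C uu * (pp b * ppm c)
      - ppm b * pp (c+1)
      - Polynomial.C uu * (ppm b * pp c)
      - ppm b * ppm c := by
    rw [e1]; ring
  rw [e2]
  simp only [map_sub, map_add, LL_C_mul, orth, Lmp, Lpm, Lmm]
  rw [gramFun]
  simp only [add_left_inj, show b+1+1 = b+2 from rfl, show c+1+1 = c+2 from rfl,
    show (b = c+1) ↔ (c+1 = b) from eq_comm, show (c = b+1) ↔ (b+1 = c) from eq_comm,
    show (b = c+2) ↔ (c+2 = b) from eq_comm, show (c = b+2) ↔ (b+2 = c) from eq_comm]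
  split_ifs <;> first | (exfalso; omega) | ring

def SS (N : ℕ) : Matrix (Fin N) (Fin N) Rxu :=
  Matrix.of fun k l => if (k:ℕ)+1 = (l:ℕ) then 1 else 0

def TD (d p q : Rxu) (N : ℕ) : Matrix (Fin N) (Fin N) Rxu :=
  d • 1 + p • SS N + q • (SS N)ᵀ

lemma TD_apply (d p q : Rxu) (N : ℕ) (k l : Fin N) :
    TD d p q N k l = d * (if (k:ℕ) = (l:ℕ) then 1 else 0)
      + p * (if (k:ℕ)+1 = (l:ℕ) then 1 else 0) + q * (if (l:ℕ)+1 = (k:ℕ) then 1 else 0) := by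
  simp only [TD, Matrix.add_apply, Matrix.smul_apply, Matrix.one_apply, SS, Matrix.transpose_apply,
    Matrix.of_apply, smul_eq_mul, Fin.ext_iff]

lemma sum_shift {N : ℕ} (f : Fin N → Rxu) (k : Fin N) :
    ∑ m : Fin N, (if (k:ℕ)+1 = (m:ℕ) then (1:Rxu) else 0) * f m
      = if h : (k:ℕ)+1 < N then f ⟨(k:ℕ)+1, h⟩ else 0 := by
  split_ifs with h
  · rw [Finset.sum_eq_single ⟨(k:ℕ)+1, h⟩]
    · rw [if_pos (by simp), one_mul]
    · intro m _ hm
      rw [if_neg (fun hc => hm (Fin.ext (by simpa using hc.symm))), zero_mul]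
    · simp
  · apply Finset.sum_eq_zero
    intro m _
    rw [if_neg (by have := m.isLt; omega), zero_mul]

lemma sum_shift' {N : ℕ} (f : Fin N → Rxu) (k : Fin N) :
    ∑ m : Fin N, (if (m:ℕ)+1 = (k:ℕ) then (1:Rxu) else 0) * f m
      = if 1 ≤ (k:ℕ) then f ⟨(k:ℕ)-1, by omega⟩ else 0 := by
  split_ifs with h
  · rw [Finset.sum_eq_single (⟨(k:ℕ)-1, by omega⟩ : Fin N)]
    · rw [if_pos (by simp; omega), one_mul]
    · intro m _ hm
      rw [if_neg (fun hc => hm (Fin.ext (by simp; omega))), zero_mul]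
    · simp
  · apply Finset.sum_eq_zero
    intro m _
    rw [if_neg (by omega), zero_mul]

lemma SS_mul_SS (N : ℕ) (k l : Fin N) :
    (SS N * SS N) k l = if (k:ℕ)+2 = (l:ℕ) then 1 else 0 := by
  rw [Matrix.mul_apply]
  have := sum_shift (fun m => SS N m l) k
  simp only [SS, Matrix.of_apply] at this ⊢
  rw [this]
  have hl := l.isLt
  split_ifs with h1 h2 h3 <;> simp at * <;> omega

lemma SS_mul_SSt (N : ℕ) (k l : Fin N) :
    (SS N * (SS N)ᵀ) k l = (if k = l then 1 else 0)
      - (if (k:ℕ)+1 = N ∧ (l:ℕ)+1 = N then (1:Rxu) else 0) := by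
  rw [Matrix.mul_apply]
  have := sum_shift (fun m => (SS N)ᵀ m l) k
  simp only [SS, Matrix.transpose_apply, Matrix.of_apply] at this ⊢
  rw [this]
  have hl := l.isLt
  have hk := k.isLt
  simp only [Fin.ext_iff]
  split_ifs with h1 h2 h3 h4 h5 h6 h7 <;> simp at * <;> omega

lemma SSt_mul_SS (N : ℕ) (k l : Fin N) :
    ((SS N)ᵀ * SS N) k l = (if k = l then 1 else 0)
      - (if (k:ℕ) = 0 ∧ (l:ℕ) = 0 then (1:Rxu) else 0) := by
  rw [Matrix.mul_apply]
  have := sum_shift' (fun m => SS N m l) k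
  simp only [SS, Matrix.transpose_apply, Matrix.of_apply] at this ⊢
  rw [this]
  have hl := l.isLt
  have hk := k.isLt
  simp only [Fin.ext_iff]
  split_ifs with h1 h2 h3 h4 h5 h6 h7 <;> simp at * <;> omega


def EE0 (N : ℕ) : Matrix (Fin N) (Fin N) Rxu :=
  Matrix.of fun k l => if (k:ℕ) = 0 ∧ (l:ℕ) = 0 then (1:Rxu) else 0
def EL (N : ℕ) : Matrix (Fin N) (Fin N) Rxu :=
  Matrix.of fun k l => if (k:ℕ)+1 = N ∧ (l:ℕ)+1 = N then (1:Rxu) else 0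
def JJ (N : ℕ) := TD uu 1 1 N
def KK (N : ℕ) := TD (xx - uu) (-1) (-1) N
def GG (N : ℕ) : Matrix (Fin N) (Fin N) Rxu :=
  (uu*(xx-uu) - 2) • 1 + EE0 N + (xx - 2*uu) • (SS N + (SS N)ᵀ)
    - SS N * SS N - ((SS N)ᵀ * (SS N)ᵀ)

lemma SSt_mat (N : ℕ) : SS N * (SS N)ᵀ = 1 - EL N :=
  Matrix.ext fun k l => by
    rw [SS_mul_SSt, Matrix.sub_apply, Matrix.one_apply]; rfl

lemma StS_mat (N : ℕ) : (SS N)ᵀ * SS N = 1 - EE0 N :=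
  Matrix.ext fun k l => by
    rw [SSt_mul_SS, Matrix.sub_apply, Matrix.one_apply]; rfl

lemma JK_eq (N : ℕ) : JJ N * KK N = GG N + EL N := by
  unfold JJ KK TD GG
  simp only [Matrix.add_mul, Matrix.mul_add, Matrix.smul_mul, Matrix.mul_smul, Matrix.one_mul,
    Matrix.mul_one, smul_smul, one_smul]
  rw [SSt_mat, StS_mat]
  module

lemma GG_apply (N : ℕ) (k l : Fin N) : GG N k l = gramFun (k:ℕ) (l:ℕ) := by
  have hT : ((SS N)ᵀ * (SS N)ᵀ) k l = (SS N * SS N) l k := by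
    rw [← Matrix.transpose_mul, Matrix.transpose_apply]
  simp only [GG, Matrix.sub_apply, Matrix.add_apply, Matrix.smul_apply, smul_eq_mul,
    Matrix.one_apply, hT, SS_mul_SS]
  simp only [SS, Matrix.of_apply, Matrix.transpose_apply, EE0, gramFun, Fin.ext_iff]

lemma GG_zero_det : (GG 0).det = 1 := Matrix.det_fin_zero


lemma TD_submatrix (d p q : Rxu) (N : ℕ) :
    (TD d p q (N+1)).submatrix Fin.succ Fin.succ = TD d p q N := by
  refine Matrix.ext fun k l => ?_
  rw [Matrix.submatrix_apply, TD_apply, TD_apply]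
  simp only [Fin.val_succ, add_left_inj]

lemma TD_det_one (d p q : Rxu) : (TD d p q 1).det = d := by
  rw [Matrix.det_fin_one, TD_apply]
  norm_num

lemma TD_det_rec (d p q : Rxu) (N : ℕ) :
    (TD d p q (N+2)).det = d * (TD d p q (N+1)).det - p * (q * (TD d p q N).det) := by
  rw [Matrix.det_succ_column_zero, Fin.sum_univ_succ, Fin.sum_univ_succ]
  simp only [Fin.succ_zero_eq_one]
  have h00 : TD d p q (N+2) 0 0 = d := by rw [TD_apply]; norm_num
  have h10 : TD d p q (N+2) 1 0 = q := by
    rw [TD_apply]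
    norm_num [show ((1 : Fin (N+2)) : ℕ) = 1 from rfl]
  have hrest : ∀ i : Fin N,
      TD d p q (N+2) i.succ.succ 0 = 0 := by
    intro i
    rw [TD_apply]
    simp only [Fin.val_succ, Fin.val_zero]
    norm_num
  rw [h00, h10]
  rw [Finset.sum_eq_zero (fun i _ => by rw [hrest i]; ring)]
  rw [Fin.succAbove_zero, TD_submatrix]
  have hB : ((TD d p q (N+2)).submatrix (1 : Fin (N+2)).succAbove Fin.succ).det
      = p * (TD d p q N).det := by
    rw [Matrix.det_succ_row_zero, Fin.sum_univ_succ]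
    have hB00 : (TD d p q (N+2)).submatrix (1 : Fin (N+2)).succAbove Fin.succ 0 0 = p := by
      rw [Matrix.submatrix_apply]
      have h0 : (1 : Fin (N+2)).succAbove 0 = 0 := by
        rw [Fin.succAbove]
        rw [if_pos]
        · rfl
        · exact (by norm_num [Fin.lt_def] : (Fin.castSucc 0 : Fin (N+2)) < 1)
      rw [h0, TD_apply]
      norm_num [show (((0:Fin (N+1)).succ : Fin (N+2)) : ℕ) = 1 from rfl]
    have hB0j : ∀ j : Fin N,
        (TD d p q (N+2)).submatrix (1 : Fin (N+2)).succAbove Fin.succ 0 j.succ = 0 := by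
      intro j
      rw [Matrix.submatrix_apply]
      have h0 : (1 : Fin (N+2)).succAbove 0 = 0 := by
        rw [Fin.succAbove]
        rw [if_pos]
        · rfl
        · exact (by norm_num [Fin.lt_def] : (Fin.castSucc 0 : Fin (N+2)) < 1)
      rw [h0, TD_apply]
      simp only [Fin.val_succ, Fin.val_zero]
      norm_num
    rw [hB00]
    rw [Finset.sum_eq_zero (fun j _ => by rw [hB0j j]; ring)]
    have hsub : ((TD d p q (N+2)).submatrix (1 : Fin (N+2)).succAbove Fin.succ).submatrix
        Fin.succ ((0 : Fin (N+1)).succAbove) = TD d p q N := by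
      refine Matrix.ext fun k l => ?_
      rw [Fin.succAbove_zero, Matrix.submatrix_apply, Matrix.submatrix_apply]
      have hrow : (1 : Fin (N+2)).succAbove k.succ = k.succ.succ := by
        rw [Fin.succAbove, if_neg]
        rw [Fin.lt_def]
        simp [Fin.val_succ]
      rw [hrow, TD_apply, TD_apply]
      simp only [Fin.val_succ, add_left_inj]
    rw [hsub]
    simp
  rw [hB]
  simp only [Fin.val_zero, Fin.val_one, pow_zero, pow_one]
  ring

lemma TD_det_fb (v p q : Rxu) (hpq : p * q = 1) :
    ∀ N, (TD v p q N).det = Polynomial.aeval v (Fb (N+1)) := by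
  have H : ∀ N, (TD v p q N).det = Polynomial.aeval v (Fb (N+1))
      ∧ (TD v p q (N+1)).det = Polynomial.aeval v (Fb (N+2)) := by
    intro N
    induction N with
    | zero =>
      constructor
      · rw [Matrix.det_fin_zero, Fb_one]; simp
      · rw [TD_det_one]
        rw [show Fb 2 = Polynomial.X from by rw [Fb_rec 0, Fb_one, Fb_zero]; ring]
        simp
    | succ N ih =>
      refine ⟨ih.2, ?_⟩
      rw [TD_det_rec, ih.1, ih.2, Fb_rec (N+1), map_sub]
      rw [_root_.map_mul, Polynomial.aeval_X]
      rw [show p * (q * (Polynomial.aeval v) (Fb (N+1))) = (p*q) * (Polynomial.aeval v) (Fb (N+1)) from by ring, hpq]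
      ring
  exact fun N => (H N).1


lemma GG_submatrix (N : ℕ) :
    (GG (N+1)).submatrix (Fin.last N).succAbove (Fin.last N).succAbove = GG N := by
  refine Matrix.ext fun k l => ?_
  rw [Matrix.submatrix_apply, Fin.succAbove_last, GG_apply, GG_apply, Fin.coe_castSucc,
    Fin.coe_castSucc]

lemma det_GG_rec (N : ℕ) :
    (GG (N+1)).det = (JJ (N+1)).det * (KK (N+1)).det - (GG N).det := by
  set Mt := JJ (N+1) * KK (N+1) with hMt
  set e1 : Fin (N+1) → Rxu := Pi.single (Fin.last N) 1 with he1
  have hG : GG (N+1) = Mt - EL (N+1) := by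
    rw [hMt, JK_eq, add_sub_cancel_right]
  have hEL_col : ∀ i : Fin (N+1), EL (N+1) i (Fin.last N) = e1 i := by
    intro i
    rw [he1, Pi.single_apply]
    simp only [EL, Matrix.of_apply, Fin.val_last]
    by_cases hi : i = Fin.last N
    · subst hi; simp
    · rw [if_neg (fun hc => hi (by rw [Fin.ext_iff, Fin.val_last]; omega)), if_neg hi]
  have hupd : GG (N+1) = Mt.updateCol (Fin.last N)
      (fun i => Mt i (Fin.last N) + (-1 : Rxu) • e1 i) := by
    rw [hG]
    refine Matrix.ext fun i j => ?_
    by_cases hj : j = Fin.last N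
    · subst hj
      rw [Matrix.updateCol_self, Matrix.sub_apply, hEL_col i]
      simp [sub_eq_add_neg]
    · rw [Matrix.updateCol_ne hj, Matrix.sub_apply]
      have : EL (N+1) i j = 0 := by
        simp only [EL, Matrix.of_apply]
        rw [if_neg (fun hc => hj (by rw [Fin.ext_iff, Fin.val_last]; omega))]
      rw [this, sub_zero]
  have hminor : (Mt.updateCol (Fin.last N) e1).det
      = (GG N).det := by
    rw [Matrix.det_succ_column _ (Fin.last N)]
    rw [Finset.sum_eq_single (Fin.last N)]
    · rw [Matrix.updateCol_self]
      simp only [he1, Pi.single_eq_same, Fin.val_last]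
      have hpow : ((-1 : Rxu)) ^ (N + N) = 1 := Even.neg_one_pow ⟨N, rfl⟩
      rw [hpow, one_mul, ← he1]
      have hsub : (Mt.updateCol (Fin.last N) e1).submatrix
          (Fin.last N).succAbove (Fin.last N).succAbove = GG N := by
        refine Matrix.ext fun k l => ?_
        rw [Matrix.submatrix_apply, Fin.succAbove_last,
          Matrix.updateCol_ne (Fin.castSucc_lt_last l).ne]
        have : Mt (Fin.castSucc k) (Fin.castSucc l) = GG (N+1) (Fin.castSucc k) (Fin.castSucc l) := by
          rw [hG, Matrix.sub_apply]
          have : EL (N+1) (Fin.castSucc k) (Fin.castSucc l) = 0 := by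
            simp only [EL, Matrix.of_apply, Fin.coe_castSucc]
            rw [if_neg (by have := l.isLt; omega)]
          rw [this, sub_zero]
        rw [this, GG_apply, GG_apply, Fin.coe_castSucc, Fin.coe_castSucc]
      rw [hsub, one_mul]
    · intro i _ hi
      rw [Matrix.updateCol_self]
      simp only [he1, Pi.single_apply]
      rw [if_neg hi]
      ring
    · simp
  have hdet := Matrix.det_updateCol_add Mt (Fin.last N)
    (fun i => Mt i (Fin.last N)) (fun i => (-1 : Rxu) • e1 i)
  rw [hupd]
  rw [show (fun i => Mt i (Fin.last N) + (-1 : Rxu) • e1 i)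
      = (fun i => Mt i (Fin.last N)) + (fun i => (-1 : Rxu) • e1 i)
      from rfl] at *
  rw [hdet]
  rw [Matrix.updateCol_eq_self]
  have hsmul := Matrix.det_updateCol_smul Mt (Fin.last N) (-1 : Rxu) e1
  rw [show (fun i => (-1 : Rxu) • e1 i)
      = ((-1 : Rxu) • e1 : Fin (N+1) → Rxu) from rfl, hsmul, hminor]
  rw [hMt, Matrix.det_mul]
  ring

def fbu (k : ℕ) : Rxu := Polynomial.aeval uu (Fb k)
def fbx (k : ℕ) : Rxu := Polynomial.aeval (xx - uu) (Fb k)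

theorem det_GG : ∀ N, (GG N).det
    = ∑ k ∈ range (N+1), (-1 : Rxu)^(N-k) * fbu (k+1) * fbx (k+1) := by
  intro N
  induction N with
  | zero =>
    rw [GG_zero_det, range_one, sum_singleton]
    simp [fbu, fbx, Fb_one]
  | succ N ih =>
    rw [det_GG_rec, ih, JJ, KK, TD_det_fb uu 1 1 (by ring), TD_det_fb (xx - uu) (-1) (-1) (by ring)]
    have h1 : ∀ k ∈ range (N+1), (-1 : Rxu)^(N+1-k) * fbu (k+1) * fbx (k+1)
        = -((-1 : Rxu)^(N-k) * fbu (k+1) * fbx (k+1)) := by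
      intro k hk
      simp only [mem_range] at hk
      rw [show N+1-k = (N-k)+1 from by omega, pow_succ]
      ring
    conv_rhs => rw [Finset.sum_range_succ, Finset.sum_congr rfl h1]
    rw [Finset.sum_neg_distrib]
    rw [show N+1-(N+1) = 0 from by omega, pow_zero, one_mul]
    simp only [fbu, fbx]
    ring

/-- identification with Motzkin polynomials -/
lemma am_zero_eq_M (m : ℕ) : am m 0 = ∑ k ∈ range (m / 2 + 1),
    MvPolynomial.C ((m.choose (2 * k) * catalan k : ℕ) : ℤ) * (MvPolynomial.X 1 : Rxu) ^ (m - 2 * k) := by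
  rw [am_eq_gm, gm]
  rw [Finset.sum_subset (fun k hk => by simp at hk ⊢; omega : range (m/2+1) ⊆ range (m+1))]
  · apply Finset.sum_congr rfl
    intro k _
    rw [show (0 + 2*k) = 2*k from by omega]
    simp only [CCz, uu]
    have hcast : ((m.choose (2*k) * catalan k : ℕ) : ℤ) = (m.choose (2*k) : ℤ) * Dz 0 k := by
      push_cast
      rw [catalan_eq_Dz]
    rw [hcast]
  · intro k _ hk
    simp only [mem_range, not_lt] at hk
    rw [Nat.choose_eq_zero_of_lt (by omega)]
    simp [CCz]

lemma LL_ww_Xpow (i j : ℕ) :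
    LL (ww * Polynomial.X^i * Polynomial.X^j) = xx * am (i+j+1) 0 - am (i+j+2) 0 := by
  have e : ww * Polynomial.X^i * Polynomial.X^j
      = Polynomial.C xx * (Polynomial.X : Polynomial Rxu)^(i+j+1) - Polynomial.X^(i+j+2) := by
    rw [ww]; ring
  rw [e, map_sub, LL_C_mul, LL_X_pow, LL_X_pow]

lemma A_entry (n : ℕ) (i j : Fin (n+1)) :
    xx * am ((i:ℕ)+(j:ℕ)+1) 0 - am ((i:ℕ)+(j:ℕ)+2) 0
      = ∑ c : Fin (n+1), (∑ b : Fin (n+1), am (i:ℕ) (b:ℕ) * gramFun (b:ℕ) (c:ℕ)) * am (j:ℕ) (c:ℕ) := by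
  rw [← LL_ww_Xpow]
  have e : ww * (Polynomial.X : Polynomial Rxu)^(i:ℕ) * Polynomial.X^(j:ℕ)
      = ∑ b ∈ range ((i:ℕ)+1), ∑ c ∈ range ((j:ℕ)+1),
          Polynomial.C (am (i:ℕ) b) * (Polynomial.C (am (j:ℕ) c) * (ww * pp b * pp c)) := by
    rw [expand_X_pow (i:ℕ), expand_X_pow (j:ℕ)]
    rw [show (ww * (∑ b ∈ range ((i:ℕ)+1), Polynomial.C (am (i:ℕ) b) * pp b))
        = ∑ b ∈ range ((i:ℕ)+1), ww * (Polynomial.C (am (i:ℕ) b) * pp b)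
        from Finset.mul_sum _ _ _]
    rw [Finset.sum_mul_sum]
    apply Finset.sum_congr rfl
    intro b _
    apply Finset.sum_congr rfl
    intro c _
    ring
  rw [e, map_sum]
  have e2 : ∀ b, LL (∑ c ∈ range ((j:ℕ)+1),
      Polynomial.C (am (i:ℕ) b) * (Polynomial.C (am (j:ℕ) c) * (ww * pp b * pp c)))
      = ∑ c ∈ range ((j:ℕ)+1), am (i:ℕ) b * (am (j:ℕ) c * gramFun b c) := by
    intro b
    rw [map_sum]
    apply Finset.sum_congr rfl
    intro c _
    rw [LL_C_mul, LL_C_mul, LL_ww]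
  rw [Finset.sum_congr rfl (fun b _ => e2 b)]
  -- extend ranges to n+1
  have hext : ∑ b ∈ range ((i:ℕ)+1), ∑ c ∈ range ((j:ℕ)+1),
        am (i:ℕ) b * (am (j:ℕ) c * gramFun b c)
      = ∑ b ∈ range (n+1), ∑ c ∈ range (n+1), am (i:ℕ) b * (am (j:ℕ) c * gramFun b c) := by
    rw [Finset.sum_subset (fun b hb => by simp at hb ⊢; have := i.isLt; omega : range ((i:ℕ)+1) ⊆ range (n+1))]
    · apply Finset.sum_congr rfl
      intro b _
      rw [Finset.sum_subset (fun c hc => by simp at hc ⊢; have := j.isLt; omega : range ((j:ℕ)+1) ⊆ range (n+1))]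
      intro c _ hc
      simp only [mem_range, not_lt] at hc
      rw [am_eq_zero_of_lt (show (j:ℕ) < c from by omega), zero_mul, mul_zero]
    · intro b _ hb
      simp only [mem_range, not_lt] at hb
      rw [am_eq_zero_of_lt (show (i:ℕ) < b from by omega)]
      simp
  rw [hext]
  rw [Finset.sum_comm]
  rw [← Fin.sum_univ_eq_sum_range (fun c => ∑ b ∈ range (n+1), am (i:ℕ) b * (am (j:ℕ) c * gramFun b c)) (n+1)]
  apply Finset.sum_congr rfl
  intro c _
  rw [Finset.sum_mul]
  rw [← Fin.sum_univ_eq_sum_range (fun b => am (i:ℕ) b * (am (j:ℕ) (c:ℕ) * gramFun b (c:ℕ))) (n+1)]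
  apply Finset.sum_congr rfl
  intro b _
  ring


end MotzkinHankelAux

theorem motzkin_poly_linear_hankel_det (n : ℕ)
    (M : ℕ → MvPolynomial (Fin 2) ℤ)
    (hM : ∀ m, M m = ∑ k ∈ range (m / 2 + 1),
        MvPolynomial.C ((m.choose (2 * k) * catalan k : ℕ) : ℤ) * X 1 ^ (m - 2 * k))
    (F : ℕ → Polynomial ℤ)
    (hF0 : F 0 = 0) (hF1 : F 1 = 1)
    (hF : ∀ m, F (m + 2) = Polynomial.X * F (m + 1) - F m) :
    (Matrix.of fun i j : Fin (n + 1) =>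
        X 0 * M ((i : ℕ) + (j : ℕ) + 1) - M ((i : ℕ) + (j : ℕ) + 2)).det
      = ∑ k ∈ range (n + 2), (-1 : MvPolynomial (Fin 2) ℤ) ^ (n + 1 - k)
          * Polynomial.aeval (X 1) (F (k + 1))
          * Polynomial.aeval (X 0 - X 1) (F (k + 1)) := by
  classical
  have hFeq : ∀ m, F m = Fb m := by
    have H : ∀ m, F m = Fb m ∧ F (m+1) = Fb (m+1) := by
      intro m
      induction m with
      | zero => exact ⟨by rw [hF0, Fb_zero], by rw [hF1, Fb_one]⟩
      | succ m ih => exact ⟨ih.2, by rw [hF m, ih.1, ih.2, Fb_rec]⟩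
    exact fun m => (H m).1
  have hMam : ∀ m, M m = am m 0 := fun m => by rw [hM m, am_zero_eq_M]
  set Am : Matrix (Fin (n+1)) (Fin (n+1)) Rxu :=
    Matrix.of (fun i b : Fin (n+1) => am (i:ℕ) (b:ℕ)) with hAmdef
  have hmat : (Matrix.of fun i j : Fin (n + 1) =>
      X 0 * M ((i : ℕ) + (j : ℕ) + 1) - M ((i : ℕ) + (j : ℕ) + 2))
      = Am * GG (n+1) * Am.transpose := by
    refine Matrix.ext fun i j => ?_
    rw [Matrix.of_apply, hMam ((i:ℕ)+(j:ℕ)+1), hMam ((i:ℕ)+(j:ℕ)+2)]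
    rw [show (X 0 : Rxu) = xx from rfl]
    rw [A_entry n i j]
    rw [Matrix.mul_apply]
    apply Finset.sum_congr rfl
    intro c _
    rw [Matrix.mul_apply, Matrix.transpose_apply]
    simp only [hAmdef, Matrix.of_apply]
    refine congrArg (· * am (j:ℕ) (c:ℕ)) ?_
    apply Finset.sum_congr rfl
    intro b _
    rw [GG_apply]
  rw [hmat, Matrix.det_mul, Matrix.det_mul]
  have hdetAm : Am.det = 1 := by
    rw [Matrix.det_of_lowerTriangular Am (by
      intro i j hij
      exact am_eq_zero_of_lt (by exact hij))]
    rw [Finset.prod_eq_one]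
    intro i _
    exact am_diag (i:ℕ)
  have hdetAmT : Am.transpose.det = 1 := by rw [Matrix.det_transpose, hdetAm]
  rw [hdetAm, hdetAmT, one_mul, mul_one]
  rw [det_GG (n+1)]
  apply Finset.sum_congr rfl
  intro k _
  rw [fbu, fbx, hFeq (k+1)]
  rfl
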